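/- Let X, Y, Z be smooth finite-dimensional real manifolds without boundary and let f : X × Y → Z be a continuously differentiable (C¹) map. For y ∈ Y write f_y : X → Z for the map x ↦ f(x, y). Suppose (x₀, y₀) ∈ X × Y is a point such that the differential of f_{y₀} at x₀ is a surjective linear map from the tangent space T_{x₀}X to the tangent space T_{f(x₀,y₀)}Z. Then there exist open sets U ⊆ Y and V ⊆ Z with y₀ ∈ U and f(x₀, y₀) ∈ V such that V ⊆ f_y(X) for every y ∈ U. -/

import Mathlib

open scoped Manifold
open Topology Filter Set

/-- Lemma 3.5 (real case): let `f : X × Y → Z` be a `C¹` map of smooth real manifolds without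
boundary, and suppose the differential at `x₀` of `f_{y₀} = f(·, y₀)` is surjective. Then
there are open sets `U ∋ y₀` and `V ∋ f(x₀, y₀)` with `V ⊆ f_y(X)` for every `y ∈ U`. -/
theorem exists_open_uniformly_surjective
    {EX : Type*} [NormedAddCommGroup EX] [NormedSpace ℝ EX] [FiniteDimensional ℝ EX]
    {EY : Type*} [NormedAddCommGroup EY] [NormedSpace ℝ EY] [FiniteDimensional ℝ EY]
    {EZ : Type*} [NormedAddCommGroup EZ] [NormedSpace ℝ EZ] [FiniteDimensional ℝ EZ]
    (X : Type*) [TopologicalSpace X] [ChartedSpace EX X]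
    [IsManifold (𝓘(ℝ, EX)) (⊤ : ℕ∞) X]
    (Y : Type*) [TopologicalSpace Y] [ChartedSpace EY Y]
    [IsManifold (𝓘(ℝ, EY)) (⊤ : ℕ∞) Y]
    (Z : Type*) [TopologicalSpace Z] [ChartedSpace EZ Z]
    [IsManifold (𝓘(ℝ, EZ)) (⊤ : ℕ∞) Z]
    (f : X × Y → Z)
    (hf : ContMDiff ((𝓘(ℝ, EX)).prod (𝓘(ℝ, EY))) (𝓘(ℝ, EZ)) 1 f)
    (x₀ : X) (y₀ : Y)
    (hsurj : Function.Surjective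
      (mfderiv (𝓘(ℝ, EX)) (𝓘(ℝ, EZ)) (fun x => f (x, y₀)) x₀)) :
    ∃ U : Set Y, ∃ V : Set Z, IsOpen U ∧ IsOpen V ∧ y₀ ∈ U ∧ f (x₀, y₀) ∈ V ∧
      ∀ y ∈ U, V ⊆ Set.range (fun x => f (x, y)) := by
  classical
  set I := (𝓘(ℝ, EX)).prod (𝓘(ℝ, EY)) with hI
  set J := (𝓘(ℝ, EZ)).prod (𝓘(ℝ, EY)) with hJ
  set p₀ : X × Y := (x₀, y₀) with hp₀
  set g : X × Y → Z × Y := fun p => (f p, p.2) with hg_def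
  have hg : ContMDiff I J 1 g := hf.prodMk contMDiff_snd
  have hgd : MDifferentiableAt I J g p₀ := (hg p₀).mdifferentiableAt one_ne_zero
  have hfd : MDifferentiableAt I (𝓘(ℝ, EZ)) f p₀ := (hf p₀).mdifferentiableAt one_ne_zero
  set q₀ : Z × Y := g p₀ with hq₀
  -- the differential of `g` at `p₀`
  have hDg : mfderiv I J g p₀ =
      (mfderiv I (𝓘(ℝ, EZ)) f p₀).prod (mfderiv I (𝓘(ℝ, EY)) Prod.snd p₀) :=
    hfd.mfderiv_prod mdifferentiableAt_snd
  have hcomp : mfderiv (𝓘(ℝ, EX)) (𝓘(ℝ, EZ)) (fun x => f (x, y₀)) x₀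
      = (mfderiv I (𝓘(ℝ, EZ)) f p₀).comp
        (ContinuousLinearMap.inl ℝ EX EY) := by
    have h1 : (fun x : X => f (x, y₀)) = f ∘ (fun x : X => (x, y₀)) := rfl
    have h2 : MDifferentiableAt (𝓘(ℝ, EX)) I (fun x : X => (x, y₀)) x₀ :=
      mdifferentiableAt_id.prodMk mdifferentiableAt_const
    rw [h1, mfderiv_comp x₀ hfd h2, hI, mfderiv_prod_left]
    rfl
  -- surjectivity of the differential of `g`
  have hsurj' : Function.Surjective (mfderiv I J g p₀) := by
    rw [hDg]
    rintro ⟨w, v⟩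
    set D : (EX × EY) →L[ℝ] EZ := mfderiv I (𝓘(ℝ, EZ)) f p₀ with hD
    obtain ⟨u, hu⟩ := hsurj ((w - D (0, v) : EZ))
    rw [hcomp] at hu
    change EX at u
    refine ⟨(u, v), ?_⟩
    have huv : ((u, v) : EX × EY) = (u, 0) + (0, v) := by simp
    have hw : D (u, v) = w := by
      rw [huv, map_add]
      have h3 : D (u, 0) = w - D (0, v) := hu
      rw [h3]; abel
    have hsnd : mfderiv I (𝓘(ℝ, EY)) Prod.snd p₀ (u, v) = v := by
      rw [hI, mfderiv_snd]; rfl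
    exact Prod.ext hw hsnd
  -- pass to extended charts
  set c₀ : EX × EY := extChartAt I p₀ p₀ with hc₀
  set G : EX × EY → EZ × EY :=
    (extChartAt J q₀) ∘ g ∘ (extChartAt I p₀).symm with hG_def
  have hGc : ContDiffAt ℝ 1 G c₀ := by
    have h := (contMDiffAt_iff.1 (hg p₀)).2
    rwa [I.range_eq_univ, contDiffWithinAt_univ] at h
  have hDeq : mfderiv I J g p₀ = fderiv ℝ G c₀ := by
    rw [hgd.mfderiv, I.range_eq_univ, fderivWithin_univ]
    rfl
  rw [hDeq] at hsurj'
  have hstrict : HasStrictFDerivAt G (fderiv ℝ G c₀) c₀ := hGc.hasStrictFDerivAt one_ne_zero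
  have hmap : Filter.map G (𝓝 c₀) = 𝓝 (G c₀) :=
    hstrict.map_nhds_eq_of_surj (LinearMap.range_eq_top.2 hsurj')
  -- the range of `g` is a neighborhood of `q₀`
  have hrange : Set.range g ∈ 𝓝 q₀ := by
    set t : Set (X × Y) :=
      g ⁻¹' (extChartAt J q₀).source ∩ (extChartAt I p₀).source with ht
    have htn : t ∈ 𝓝 p₀ := Filter.inter_mem
      ((hg p₀).continuousAt.preimage_mem_nhds (extChartAt_source_mem_nhds q₀))
      (extChartAt_source_mem_nhds p₀)
    have h1 : (extChartAt I p₀) '' t ∈ 𝓝 c₀ :=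
      extChartAt_image_nhds_mem_nhds_of_boundaryless htn
    have h2 : G '' ((extChartAt I p₀) '' t) ∈ 𝓝 (G c₀) := by
      rw [← hmap]; exact Filter.image_mem_map h1
    have hGc₀ : G c₀ = extChartAt J q₀ q₀ := by
      simp only [hG_def, Function.comp_apply, hc₀,
        (extChartAt I p₀).left_inv (mem_extChartAt_source p₀)]
      rfl
    rw [hGc₀] at h2
    have hmap2 : Filter.map (extChartAt J q₀).symm (𝓝 (extChartAt J q₀ q₀)) = 𝓝 q₀ := by
      have h := map_extChartAt_symm_nhdsWithin_range (I := J) q₀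
      rwa [J.range_eq_univ, nhdsWithin_univ] at h
    have h3 : (extChartAt J q₀).symm '' (G '' ((extChartAt I p₀) '' t)) ∈ 𝓝 q₀ := by
      rw [← hmap2]; exact Filter.image_mem_map h2
    refine Filter.mem_of_superset h3 ?_
    rintro _ ⟨_, ⟨_, ⟨p, hp, rfl⟩, rfl⟩, rfl⟩
    have hpl : (extChartAt I p₀).symm (extChartAt I p₀ p) = p :=
      (extChartAt I p₀).left_inv hp.2
    simp only [hG_def, Function.comp_apply, hpl,
      (extChartAt J q₀).left_inv hp.1]
    exact Set.mem_range_self p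
  -- extract a product neighborhood
  have hq₀eq : q₀ = (f (x₀, y₀), y₀) := rfl
  rw [hq₀eq] at hrange
  obtain ⟨V, U, hV, hzV, hU, hyU, hVU⟩ := mem_nhds_prod_iff'.1 hrange
  refine ⟨U, V, hU, hV, hyU, hzV, ?_⟩
  intro y hy z hz
  obtain ⟨⟨x, y'⟩, hxy⟩ := hVU (Set.mk_mem_prod hz hy)
  have h1 : f (x, y') = z := congrArg Prod.fst hxy
  have h2 : y' = y := congrArg Prod.snd hxy
  exact ⟨x, by rw [← h2]; exact h1⟩
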